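/- Let G = ⟨a, b | b^{-1}a²b = a^{-2}, a^{-1}b²a = b^{-2}⟩ and set z = (ab)². Then a^{-1} z a = z^{-1} and b^{-1} z b = z^{-1}, i.e., both generators invert z under conjugation. -/

import Mathlib

noncomputable section

/-- The relators `b⁻¹a²ba²` and `a⁻¹b²ab²` of the Promislow group. -/
def promislowRels : Set (FreeGroup (Fin 2)) :=
  {(FreeGroup.of 1)⁻¹ * (FreeGroup.of 0) ^ 2 * FreeGroup.of 1 * (FreeGroup.of 0) ^ 2,
   (FreeGroup.of 0)⁻¹ * (FreeGroup.of 1) ^ 2 * FreeGroup.of 0 * (FreeGroup.of 1) ^ 2}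

/-- The Promislow group `G = ⟨a, b | b⁻¹a²b = a⁻², a⁻¹b²a = b⁻²⟩`. -/
abbrev PromislowGroup := PresentedGroup promislowRels

/-- The generator `a` of the Promislow group. -/
def pa : PromislowGroup := PresentedGroup.of 0

/-- The generator `b` of the Promislow group. -/
def pb : PromislowGroup := PresentedGroup.of 1

/-- The element `z = (ab)²` of the Promislow group. -/
def pz : PromislowGroup := (pa * pb) ^ 2

lemma promislow_rel1 : pb⁻¹ * (pa * pa) * pb * (pa * pa) = 1 := by
  have h : ((FreeGroup.of 1)⁻¹ * (FreeGroup.of 0) ^ 2 * FreeGroup.of 1 * (FreeGroup.of 0) ^ 2)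
      ∈ Subgroup.normalClosure promislowRels :=
    Subgroup.subset_normalClosure (by left; rfl)
  have := (QuotientGroup.eq_one_iff _).mpr h
  have h2 : PresentedGroup.mk promislowRels
      ((FreeGroup.of 1)⁻¹ * (FreeGroup.of 0) ^ 2 * FreeGroup.of 1 * (FreeGroup.of 0) ^ 2) = 1 := this
  simpa [pa, pb, PresentedGroup.of, pow_two, mul_assoc, map_mul, map_inv, map_pow] using h2

lemma promislow_rel2 : pa⁻¹ * (pb * pb) * pa * (pb * pb) = 1 := by
  have h : ((FreeGroup.of 0)⁻¹ * (FreeGroup.of 1) ^ 2 * FreeGroup.of 0 * (FreeGroup.of 1) ^ 2)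
      ∈ Subgroup.normalClosure promislowRels :=
    Subgroup.subset_normalClosure (by right; rfl)
  have := (QuotientGroup.eq_one_iff _).mpr h
  have h2 : PresentedGroup.mk promislowRels
      ((FreeGroup.of 0)⁻¹ * (FreeGroup.of 1) ^ 2 * FreeGroup.of 0 * (FreeGroup.of 1) ^ 2) = 1 := this
  simpa [pa, pb, PresentedGroup.of, pow_two, mul_assoc, map_mul, map_inv, map_pow] using h2

/-- `a²b = ba⁻²` in the Promislow group. -/
lemma promislow_e1 : pa * pa * pb = pb * pa⁻¹ * pa⁻¹ := by
  calc pa * pa * pb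
      = pb * (pb⁻¹ * (pa * pa) * pb * (pa * pa)) * pa⁻¹ * pa⁻¹ := by group
    _ = pb * 1 * pa⁻¹ * pa⁻¹ := by rw [promislow_rel1]
    _ = pb * pa⁻¹ * pa⁻¹ := by group

/-- `ab² = b⁻²a` in the Promislow group. -/
lemma promislow_e2 : pa * pb * pb = pb⁻¹ * pb⁻¹ * pa := by
  calc pa * pb * pb
      = pb⁻¹ * pb⁻¹ * pa * (pa⁻¹ * (pb * pb) * pa * (pb * pb)) := by group
    _ = pb⁻¹ * pb⁻¹ * pa * 1 := by rw [promislow_rel2]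
    _ = pb⁻¹ * pb⁻¹ * pa := by group

/-- In the Promislow group, both generators invert `z = (ab)²` under conjugation. -/
theorem generators_invert_z :
    pa⁻¹ * pz * pa = pz⁻¹ ∧ pb⁻¹ * pz * pb = pz⁻¹ := by
  have hz : pz = pa * pb * (pa * pb) := by rw [pz, pow_two]
  have key1 : pz * (pa⁻¹ * pz * pa) = 1 := by
    calc pz * (pa⁻¹ * pz * pa)
        = pa * pb * (pa * pb * pb) * pa * pb * pa := by rw [hz]; group
      _ = pa * pb * (pb⁻¹ * pb⁻¹ * pa) * pa * pb * pa := by rw [promislow_e2]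
      _ = pa * pb⁻¹ * (pa * pa * pb) * pa := by group
      _ = pa * pb⁻¹ * (pb * pa⁻¹ * pa⁻¹) * pa := by rw [promislow_e1]
      _ = 1 := by group
  have key2 : pz * (pb⁻¹ * pz * pb) = 1 := by
    calc pz * (pb⁻¹ * pz * pb)
        = pa * pb * (pa * pa * pb) * pa * pb * pb := by rw [hz]; group
      _ = pa * pb * (pb * pa⁻¹ * pa⁻¹) * pa * pb * pb := by rw [promislow_e1]
      _ = (pa * pb * pb) * pa⁻¹ * pb * pb := by group
      _ = (pb⁻¹ * pb⁻¹ * pa) * pa⁻¹ * pb * pb := by rw [promislow_e2]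
      _ = 1 := by group
  refine ⟨?_, ?_⟩
  · have := inv_eq_of_mul_eq_one_right key1
    rw [← this]
  · have := inv_eq_of_mul_eq_one_right key2
    rw [← this]
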